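/- For every s > 0, q ∈ (0,1) and R > 0, the function g : ℝ → ℝ defined by g(u) = σ_{s,q}((R² − u)³) for u < R² and g(u) = 0 for u ≥ R² is twice continuously differentiable on ℝ. (Consequently, each smoothed adjacency entry x ↦ \bar a_{ij}(x), obtained by evaluating g at the squared inter-robot distance, is twice continuously differentiable in the robots' positions.) -/

import Mathlib

/-- The parametrized sigmoid function σ_{s,q}(y) = (1+q)/(1 + q⁻¹ e^{-s y}) − q. -/
noncomputable def sigmaFn (s q y : ℝ) : ℝ :=
  (1 + q) / (1 + q⁻¹ * Real.exp (-(s * y))) - q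

open Filter Asymptotics

lemma maxpow_littleO (n : ℕ) (hn : 2 ≤ n) :
    (fun x : ℝ => max x 0 ^ n) =o[nhds 0] fun x => x := by
  rw [isLittleO_iff]
  intro c hc
  have hmem : Metric.ball (0:ℝ) (min c 1) ∈ nhds (0:ℝ) :=
    Metric.ball_mem_nhds 0 (lt_min hc one_pos)
  filter_upwards [hmem] with x hx
  simp only [Metric.mem_ball, Real.dist_eq, sub_zero] at hx
  have h1 : |x| < 1 := lt_of_lt_of_le hx (min_le_right _ _)
  have h2 : |x| < c := lt_of_lt_of_le hx (min_le_left _ _)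
  have hmax : |max x 0| ≤ |x| := by
    rcases le_total x 0 with h | h
    · simp [max_eq_right h]
    · simp [max_eq_left h]
  have hb : |max x 0 ^ n| ≤ |x| ^ n := by
    rw [abs_pow]
    exact pow_le_pow_left₀ (abs_nonneg _) hmax n
  calc ‖max x 0 ^ n‖ = |max x 0 ^ n| := rfl
    _ ≤ |x| ^ n := hb
    _ ≤ |x| ^ 2 := pow_le_pow_of_le_one (abs_nonneg _) h1.le hn
    _ ≤ c * |x| := by nlinarith [abs_nonneg x]
    _ = c * ‖x‖ := rfl

lemma hasDerivAt_maxpow (n : ℕ) (hn : 2 ≤ n) (x : ℝ) :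
    HasDerivAt (fun x : ℝ => max x 0 ^ n) ((n : ℝ) * max x 0 ^ (n - 1)) x := by
  rcases lt_trichotomy x 0 with hx | hx | hx
  · have hev : (fun y : ℝ => max y 0 ^ n) =ᶠ[nhds x] fun _ => (0:ℝ) := by
      filter_upwards [Iio_mem_nhds hx] with y hy
      simp [max_eq_right (le_of_lt (Set.mem_Iio.mp hy)), zero_pow (by omega : n ≠ 0)]
    have := (hasDerivAt_const x (0:ℝ)).congr_of_eventuallyEq hev
    simpa [max_eq_right hx.le, zero_pow (by omega : n - 1 ≠ 0)] using this
  · subst hx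
    have h0 : (fun y : ℝ => max y 0 ^ n) =o[nhds 0] fun y => y := maxpow_littleO n hn
    have : HasDerivAt (fun y : ℝ => max y 0 ^ n) 0 0 := by
      rw [hasDerivAt_iff_isLittleO]
      simpa [zero_pow (by omega : n ≠ 0)] using h0
    simpa [zero_pow (by omega : n - 1 ≠ 0)] using this
  · have hev : (fun y : ℝ => max y 0 ^ n) =ᶠ[nhds x] fun y => y ^ n := by
      filter_upwards [Ioi_mem_nhds hx] with y hy
      simp [max_eq_left (le_of_lt (Set.mem_Ioi.mp hy))]
    have := (hasDerivAt_pow n x).congr_of_eventuallyEq hev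
    simpa [max_eq_left hx.le] using this

lemma contDiff_maxcube : ContDiff ℝ 2 (fun x : ℝ => max x 0 ^ 3) := by
  have hd3 : ∀ x : ℝ, HasDerivAt (fun x : ℝ => max x 0 ^ 3) (3 * max x 0 ^ 2) x := by
    intro x; simpa using hasDerivAt_maxpow 3 (by norm_num) x
  have hd2 : ∀ x : ℝ, HasDerivAt (fun x : ℝ => 3 * max x 0 ^ 2) (6 * max x 0) x := by
    intro x
    have h := (hasDerivAt_maxpow 2 (le_refl 2) x).const_mul (3:ℝ)
    refine h.congr_deriv ?_
    push_cast
    ring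
  have hderiv3 : deriv (fun x : ℝ => max x 0 ^ 3) = fun x => 3 * max x 0 ^ 2 :=
    funext fun x => (hd3 x).deriv
  have hderiv2 : deriv (fun x : ℝ => 3 * max x 0 ^ 2) = fun x => 6 * max x 0 :=
    funext fun x => (hd2 x).deriv
  rw [show (2 : WithTop ℕ∞) = 1 + 1 from rfl, contDiff_succ_iff_deriv]
  refine ⟨fun x => (hd3 x).differentiableAt, by simp, ?_⟩
  rw [hderiv3, contDiff_one_iff_deriv]
  exact ⟨fun x => (hd2 x).differentiableAt,
    hderiv2 ▸ continuous_const.mul (continuous_id.max continuous_const)⟩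

theorem stmt_4 (s q R : ℝ) (hs : 0 < s) (hq0 : 0 < q) (hq1 : q < 1) (hR : 0 < R) :
    ContDiff ℝ 2 (fun u : ℝ => if u < R ^ 2 then sigmaFn s q ((R ^ 2 - u) ^ 3) else 0) := by
  have hden : ∀ y : ℝ, 1 + q⁻¹ * Real.exp (-(s * y)) ≠ 0 := fun y => by
    positivity
  have hsig : ContDiff ℝ 2 (fun y : ℝ => sigmaFn s q y) := by
    unfold sigmaFn
    exact (contDiff_const.div
      (contDiff_const.add (contDiff_const.mul
        (Real.contDiff_exp.comp ((contDiff_const.mul contDiff_id).neg)))) hden).sub contDiff_const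
  have hinner : ContDiff ℝ 2 (fun u : ℝ => max (R ^ 2 - u) 0 ^ 3) :=
    contDiff_maxcube.comp (contDiff_const.sub contDiff_id)
  have hcomp : ContDiff ℝ 2 (fun u : ℝ => sigmaFn s q (max (R ^ 2 - u) 0 ^ 3)) :=
    hsig.comp hinner
  have heq : (fun u : ℝ => if u < R ^ 2 then sigmaFn s q ((R ^ 2 - u) ^ 3) else 0)
      = fun u : ℝ => sigmaFn s q (max (R ^ 2 - u) 0 ^ 3) := by
    funext u
    by_cases h : u < R ^ 2
    · rw [if_pos h, max_eq_left (by linarith)]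
    · rw [if_neg h, max_eq_right (by linarith [not_lt.mp h]), zero_pow (by norm_num)]
      unfold sigmaFn
      rw [mul_zero, neg_zero, Real.exp_zero, mul_one]
      field_simp
      ring
  rw [heq]
  exact hcomp
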